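/- Let q be a prime power, n ≥ 1 with gcd(n,q) = 1, and ζ a primitive n-th root of unity in an algebraic closure K of F_q. Then μ(F_q,n) = min{ w_H(f) + w_H(f̂) : f ∈ R(F_q,n), f ≠ 0 }, where f̂ is the Mattson–Solomon vector of the degree-< n representative of f. -/

import Mathlib

open Polynomial

/-- The ring R(F,n) = F[X]/(X^n - 1). -/
abbrev CycRing (F : Type*) [Field F] (n : ℕ) := AdjoinRoot (X ^ n - Polynomial.C (1 : F))

/-- The unique representative of degree < n of an element of F[X]/(X^n-1). -/
noncomputable def cycRep {F : Type*} [Field F] {n : ℕ} (f : CycRing F n) : F[X] :=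
  if h : n = 0 then 0
  else AdjoinRoot.modByMonicHom (monic_X_pow_sub_C (1 : F) h) f

/-- Hamming weight of an element of F[X]/(X^n-1): the number of nonzero coefficients of
its representative of degree < n. -/
noncomputable def cycWt {F : Type*} [Field F] {n : ℕ} (f : CycRing F n) : ℕ :=
  (cycRep f).support.card

/-- Minimum distance of a cyclic code (ideal of F[X]/(X^n-1)). -/
noncomputable def cycDist {F : Type*} [Field F] {n : ℕ} (I : Ideal (CycRing F n)) : ℕ :=
  sInf {w | ∃ f ∈ I, f ≠ 0 ∧ cycWt f = w}

/-- Dimension of a cyclic code as an F-vector space. -/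
noncomputable def cycDim (F : Type*) [Field F] {n : ℕ} (I : Ideal (CycRing F n)) : ℕ :=
  Module.finrank F (Submodule.restrictScalars F I)

/-- The invariant μ(F,n). -/
noncomputable def mu (F : Type*) [Field F] (n : ℕ) : ℕ :=
  sInf {w | ∃ f : CycRing F n, f ≠ 0 ∧
    cycDist (Ideal.span {f}) + cycDim F (Ideal.span {f}) = w}

/-- Hamming weight of a vector: its number of nonzero coordinates. -/
noncomputable def wt {ι α : Type*} [Zero α] (v : ι → α) : ℕ := Set.ncard {i | v i ≠ 0}

/-- The Mattson–Solomon vector (g(ζ), g(ζ²), …, g(ζⁿ)) of a polynomial g over F. -/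
noncomputable def msVecPoly {F : Type*} [Field F] (n : ℕ) (ζ : AlgebraicClosure F)
    (g : Polynomial F) : Fin n → AlgebraicClosure F :=
  fun j => Polynomial.aeval (ζ ^ ((j : ℕ) + 1)) g

section Aux

variable {F : Type*} [Field F] {n : ℕ}

lemma mk_cycRep (hn : n ≠ 0) (f : CycRing F n) :
    AdjoinRoot.mk (X ^ n - C (1 : F)) (cycRep f) = f := by
  rw [cycRep, dif_neg hn]
  exact AdjoinRoot.mk_leftInverse (monic_X_pow_sub_C (1 : F) hn) f

lemma cycRep_ne_zero (hn : n ≠ 0) {f : CycRing F n} (hf : f ≠ 0) : cycRep f ≠ 0 := by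
  intro h
  apply hf
  rw [← mk_cycRep hn f, h, map_zero]

lemma finiteDimensional_cycRing (hn : n ≠ 0) : FiniteDimensional F (CycRing F n) :=
  Module.Finite.of_basis (AdjoinRoot.powerBasis (monic_X_pow_sub_C (1 : F) hn).ne_zero).basis

lemma finrank_cycRing (hn : n ≠ 0) : Module.finrank F (CycRing F n) = n := by
  rw [(AdjoinRoot.powerBasis (monic_X_pow_sub_C (1 : F) hn).ne_zero).finrank,
    AdjoinRoot.powerBasis_dim, natDegree_X_pow_sub_C]

lemma cycDim_span_mk (hn : n ≠ 0) {g : F[X]} (hg : g ∣ (X ^ n - C (1 : F))) :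
    cycDim F (Ideal.span {AdjoinRoot.mk (X ^ n - C (1 : F)) g}) = n - g.natDegree := by
  have hm : (X ^ n - C (1 : F)).Monic := monic_X_pow_sub_C 1 hn
  have hm0 : (X ^ n - C (1 : F)) ≠ 0 := hm.ne_zero
  have hg0 : g ≠ 0 := fun h => hm0 (by simpa [h] using hg)
  haveI : FiniteDimensional F (CycRing F n) := finiteDimensional_cycRing hn
  have hdegle : g.natDegree ≤ n := by
    have := natDegree_le_of_dvd hg hm0
    rwa [natDegree_X_pow_sub_C] at this
  have hle : Ideal.span {X ^ n - C (1 : F)} ≤ Ideal.span {g} :=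
    Ideal.span_singleton_le_span_singleton.mpr hg
  have hmap : Ideal.map (Ideal.Quotient.mkₐ F (Ideal.span {X ^ n - C (1 : F)}))
      (Ideal.span {g}) = Ideal.span {AdjoinRoot.mk (X ^ n - C (1 : F)) g} := by
    rw [Ideal.map_span, Set.image_singleton]
    rfl
  have e1 : (CycRing F n ⧸ Ideal.span {AdjoinRoot.mk (X ^ n - C (1 : F)) g}) ≃ₐ[F]
      (F[X] ⧸ Ideal.span {g}) := hmap ▸ DoubleQuot.quotQuotEquivQuotOfLEₐ F hle
  have h2 : Module.finrank F
      (CycRing F n ⧸ Ideal.span {AdjoinRoot.mk (X ^ n - C (1 : F)) g}) = g.natDegree := by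
    rw [e1.toLinearEquiv.finrank_eq]
    exact (AdjoinRoot.powerBasis hg0).finrank.trans (AdjoinRoot.powerBasis_dim hg0)
  have h3 := Submodule.finrank_quotient_add_finrank
    (Submodule.restrictScalars F (Ideal.span {AdjoinRoot.mk (X ^ n - C (1 : F)) g}))
  have h4 : Module.finrank F
        (CycRing F n ⧸ Submodule.restrictScalars F
          (Ideal.span {AdjoinRoot.mk (X ^ n - C (1 : F)) g})) =
      Module.finrank F (CycRing F n ⧸ Ideal.span {AdjoinRoot.mk (X ^ n - C (1 : F)) g}) :=
    (Submodule.Quotient.restrictScalarsEquiv F _).finrank_eq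
  rw [h4, h2, finrank_cycRing hn] at h3
  unfold cycDim
  exact Nat.eq_sub_of_add_eq' h3

lemma span_cycRep_gcd [DecidableEq F] (hn : n ≠ 0) (f : CycRing F n) :
    Ideal.span {f} = Ideal.span {AdjoinRoot.mk (X ^ n - C (1 : F))
      (EuclideanDomain.gcd (cycRep f) (X ^ n - C (1 : F)))} := by
  set m : F[X] := X ^ n - C (1 : F) with hm
  set p : F[X] := cycRep f with hp
  set g : F[X] := EuclideanDomain.gcd p m with hgdef
  apply le_antisymm
  · apply Ideal.span_singleton_le_span_singleton.mpr
    obtain ⟨c, hc⟩ := EuclideanDomain.gcd_dvd_left p m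
    refine ⟨AdjoinRoot.mk m c, ?_⟩
    rw [← mk_cycRep hn f, ← map_mul, ← hc]
  · apply Ideal.span_singleton_le_span_singleton.mpr
    have hbezout := EuclideanDomain.gcd_eq_gcd_ab p m
    refine ⟨AdjoinRoot.mk m (EuclideanDomain.gcdA p m), ?_⟩
    have : AdjoinRoot.mk m g = AdjoinRoot.mk m (p * EuclideanDomain.gcdA p m
        + m * EuclideanDomain.gcdB p m) := by rw [← hbezout]
    rw [this, map_add, map_mul, map_mul, AdjoinRoot.mk_self, zero_mul, add_zero,
      mk_cycRep hn f]

lemma wt_msVec [DecidableEq F] (hn : n ≠ 0) (hnF : (n : F) ≠ 0) {ζ : AlgebraicClosure F}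
    (hζ : IsPrimitiveRoot ζ n) {p : F[X]} (hp : p ≠ 0) :
    wt (msVecPoly n ζ p) = n - (EuclideanDomain.gcd p (X ^ n - C (1 : F))).natDegree := by
  classical
  haveI : NeZero n := ⟨hn⟩
  set φ : F →+* AlgebraicClosure F := algebraMap F (AlgebraicClosure F) with hφ
  set m : F[X] := X ^ n - C (1 : F) with hm
  have hmm : m.Monic := monic_X_pow_sub_C 1 hn
  have hm0 : m ≠ 0 := hmm.ne_zero
  set g : F[X] := EuclideanDomain.gcd p m with hgdef
  have hgm : g ∣ m := EuclideanDomain.gcd_dvd_right p m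
  have hg0 : g ≠ 0 := by
    intro h
    exact hp ((EuclideanDomain.gcd_eq_zero_iff.mp h).1)
  have hmsep : m.Separable := separable_X_pow_sub_C (1 : F) hnF one_ne_zero
  have hgsep : g.Separable := hmsep.of_dvd hgm
  set G : (AlgebraicClosure F)[X] := g.map φ with hG
  have hG0 : G ≠ 0 := Polynomial.map_ne_zero hg0
  have hGsep : G.Separable := hgsep.map
  -- roots of unity are roots of m
  have hmroot : ∀ j : Fin n, aeval (ζ ^ ((j : ℕ) + 1)) m = 0 := by
    intro j
    have : (ζ ^ ((j : ℕ) + 1)) ^ n = 1 := by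
      rw [← pow_mul, mul_comm, pow_mul, hζ.pow_eq_one, one_pow]
    simp [hm, this]
  -- p vanishes iff g vanishes at roots of unity
  have hiff : ∀ j : Fin n, (aeval (ζ ^ ((j : ℕ) + 1)) p = 0 ↔
      aeval (ζ ^ ((j : ℕ) + 1)) g = 0) := by
    intro j
    constructor
    · intro h
      have := Polynomial.eval₂_gcd_eq_zero (ϕ := φ) (f := p) (g := m)
        (α := ζ ^ ((j : ℕ) + 1)) (by rwa [← aeval_def]) (by
          have := hmroot j; rwa [← aeval_def])
      rwa [← aeval_def] at this
    · intro h
      obtain ⟨c, hc⟩ := EuclideanDomain.gcd_dvd_left p m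
      rw [hc, map_mul, ← hgdef, h, zero_mul]
  -- the injection j ↦ ζ^(j+1)
  have hpowmod : ∀ k : ℕ, ζ ^ (k % n) = ζ ^ k := by
    intro k
    conv_rhs => rw [← Nat.mod_add_div k n]
    rw [pow_add, pow_mul, hζ.pow_eq_one, one_pow, mul_one]
  have hinj : ∀ a b : Fin n, ζ ^ ((a : ℕ) + 1) = ζ ^ ((b : ℕ) + 1) → a = b := by
    intro a b h
    have h1 : ζ ^ (((a : ℕ) + 1) % n) = ζ ^ (((b : ℕ) + 1) % n) := by
      rw [hpowmod, hpowmod, h]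
    have h2 : ((a : ℕ) + 1) % n = ((b : ℕ) + 1) % n :=
      hζ.pow_inj (Nat.mod_lt _ (Nat.pos_of_ne_zero hn))
        (Nat.mod_lt _ (Nat.pos_of_ne_zero hn)) h1
    have h3 : (a : ℕ) ≡ (b : ℕ) [MOD n] := Nat.ModEq.add_right_cancel' 1 h2
    have h4 : (a : ℕ) = (b : ℕ) := by
      have h5 : (a : ℕ) % n = (b : ℕ) % n := h3
      rwa [Nat.mod_eq_of_lt a.isLt, Nat.mod_eq_of_lt b.isLt] at h5
    exact Fin.ext h4
  -- the filter of zero coordinates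
  set T : Finset (Fin n) :=
    Finset.univ.filter (fun j => aeval (ζ ^ ((j : ℕ) + 1)) g = 0) with hT
  -- image of T is the root set of G
  have himage : T.image (fun j : Fin n => ζ ^ ((j : ℕ) + 1)) = G.roots.toFinset := by
    ext x
    simp only [Finset.mem_image, Multiset.mem_toFinset, mem_roots hG0, IsRoot.def]
    constructor
    · rintro ⟨j, hj, rfl⟩
      rw [hT, Finset.mem_filter] at hj
      have := hj.2
      rwa [aeval_def, ← eval_map] at this
    · intro hx
      have hxm : eval x (m.map φ) = 0 := by
        obtain ⟨c, hc⟩ := hgm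
        rw [hc, Polynomial.map_mul, eval_mul, ← hG, hx, zero_mul]
      have hxn : x ^ n = 1 := by
        have : eval x (m.map φ) = x ^ n - 1 := by simp [hm]
        rw [this] at hxm
        linear_combination hxm
      obtain ⟨i, hi, rfl⟩ := hζ.eq_pow_of_pow_eq_one hxn
      rcases Nat.eq_zero_or_pos i with hi0 | hipos
      · have hval : ζ ^ ((n - 1 : ℕ) + 1) = ζ ^ i := by
          have h1 : (n - 1 : ℕ) + 1 = n := by omega
          rw [h1, hζ.pow_eq_one, hi0, pow_zero]
        refine ⟨⟨n - 1, Nat.sub_lt (Nat.pos_of_ne_zero hn) Nat.one_pos⟩, ?_, ?_⟩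
        · rw [hT, Finset.mem_filter]
          refine ⟨Finset.mem_univ _, ?_⟩
          show aeval (ζ ^ ((n - 1 : ℕ) + 1)) g = 0
          rw [hval, aeval_def, ← eval_map, ← hG, hx]
        · show ζ ^ ((n - 1 : ℕ) + 1) = ζ ^ i
          exact hval
      · have hpow : (i - 1 : ℕ) + 1 = i := by omega
        refine ⟨⟨i - 1, by omega⟩, ?_, ?_⟩
        · rw [hT, Finset.mem_filter]
          refine ⟨Finset.mem_univ _, ?_⟩
          show aeval (ζ ^ ((i - 1 : ℕ) + 1)) g = 0
          rw [hpow, aeval_def, ← eval_map, ← hG, hx]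
        · show ζ ^ ((i - 1 : ℕ) + 1) = ζ ^ i
          rw [hpow]
  have hcardT : T.card = g.natDegree := by
    have hcardim : (T.image (fun j : Fin n => ζ ^ ((j : ℕ) + 1))).card = T.card :=
      Finset.card_image_of_injOn (fun a _ b _ h => hinj a b h)
    have hsplits : G.Splits := IsAlgClosed.splits G
    have : G.natDegree = Multiset.card G.roots := by
      exact hsplits.natDegree_eq_card_roots
    have hnodup : G.roots.Nodup := Polynomial.nodup_roots hGsep
    rw [himage] at hcardim
    rw [← hcardim, Multiset.toFinset_card_of_nodup hnodup, ← this, hG, natDegree_map]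
  -- now compute wt
  have hwt : wt (msVecPoly n ζ p) =
      (Finset.univ.filter (fun j : Fin n => aeval (ζ ^ ((j : ℕ) + 1)) p ≠ 0)).card := by
    rw [wt, Set.ncard_eq_toFinset_card']
    congr 1
    ext j
    simp [msVecPoly]
    exact Set.mem_toFinset
  have hcompl : (Finset.univ.filter (fun j : Fin n => aeval (ζ ^ ((j : ℕ) + 1)) p ≠ 0)) =
      Tᶜ := by
    ext j
    simp only [Finset.mem_filter, Finset.mem_univ, true_and, Finset.mem_compl, hT, ne_eq]
    rw [hiff j]
  rw [hwt, hcompl, Finset.card_compl, hcardT, Fintype.card_fin]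

lemma cycDim_eq_wt_msVec [DecidableEq F] (hn : n ≠ 0) (hnF : (n : F) ≠ 0)
    {ζ : AlgebraicClosure F} (hζ : IsPrimitiveRoot ζ n) {f : CycRing F n} (hf : f ≠ 0) :
    cycDim F (Ideal.span {f}) = wt (msVecPoly n ζ (cycRep f)) := by
  rw [span_cycRep_gcd hn f,
    cycDim_span_mk hn (EuclideanDomain.gcd_dvd_right (cycRep f) (X ^ n - C (1 : F))),
    wt_msVec hn hnF hζ (cycRep_ne_zero hn hf)]

lemma cycDim_mono (hn : n ≠ 0) {I J : Ideal (CycRing F n)} (h : I ≤ J) :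
    cycDim F I ≤ cycDim F J := by
  haveI : FiniteDimensional F (CycRing F n) := finiteDimensional_cycRing hn
  exact Submodule.finrank_mono (fun x hx => h hx)

end Aux

/-- μ(F_q,n) = min{ w_H(f) + w_H(f̂) : f ∈ R(F_q,n), f ≠ 0 }, where f̂ is the
Mattson–Solomon vector of the degree-< n representative of f. -/
theorem mu_eq_min_wt_add_wt_msVec (q n : ℕ) (F : Type*) [Field F] [Fintype F]
    (hq : Fintype.card F = q) (hn : 1 ≤ n) (hcop : Nat.Coprime n q)
    (ζ : AlgebraicClosure F) (hζ : IsPrimitiveRoot ζ n) :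
    mu F n = sInf {w | ∃ f : CycRing F n, f ≠ 0 ∧
      cycWt f + wt (msVecPoly n ζ (cycRep f)) = w} := by
  classical
  have hn0 : n ≠ 0 := by omega
  -- (n : F) ≠ 0
  have hnF : (n : F) ≠ 0 := by
    intro h
    have hr : CharP F (ringChar F) := ringChar.charP F
    have h1 : ringChar F ∣ n := (CharP.cast_eq_zero_iff F (ringChar F) n).mp h
    have h2 : ringChar F ∣ q := by
      have : ((q : ℕ) : F) = 0 := by
        rw [← hq]; exact FiniteField.cast_card_eq_zero F
      exact (CharP.cast_eq_zero_iff F (ringChar F) q).mp this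
    have h3 : ringChar F ∣ Nat.gcd n q := Nat.dvd_gcd h1 h2
    rw [hcop] at h3
    have h4 : ringChar F = 1 := Nat.eq_one_of_dvd_one h3
    have : ((1 : ℕ) : F) = 0 := by
      rw [← h4]; exact CharP.cast_eq_zero F (ringChar F)
    simp at this
  -- 1 ≠ 0 in CycRing
  have hone : (1 : CycRing F n) ≠ 0 := by
    have : AdjoinRoot.mk (X ^ n - C (1 : F)) 1 = 1 := map_one _
    rw [← this]
    rw [Ne, AdjoinRoot.mk_eq_zero]
    intro hdvd
    have hu : IsUnit (X ^ n - C (1 : F)) := isUnit_of_dvd_one hdvd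
    have := natDegree_eq_zero_of_isUnit hu
    rw [natDegree_X_pow_sub_C] at this
    omega
  set A : Set ℕ := {w | ∃ f : CycRing F n, f ≠ 0 ∧
    cycDist (Ideal.span {f}) + cycDim F (Ideal.span {f}) = w} with hA
  set B : Set ℕ := {w | ∃ f : CycRing F n, f ≠ 0 ∧
    cycWt f + wt (msVecPoly n ζ (cycRep f)) = w} with hB
  have hAne : A.Nonempty := ⟨_, 1, hone, rfl⟩
  have hBne : B.Nonempty := ⟨_, 1, hone, rfl⟩
  have hdist_le : ∀ (f : CycRing F n), f ≠ 0 →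
      cycDist (Ideal.span {f}) ≤ cycWt f := fun f hf =>
    Nat.sInf_le ⟨f, Ideal.mem_span_singleton_self f, hf, rfl⟩
  have key : ∀ (f : CycRing F n), f ≠ 0 →
      cycDim F (Ideal.span {f}) = wt (msVecPoly n ζ (cycRep f)) :=
    fun f hf => cycDim_eq_wt_msVec hn0 hnF hζ hf
  show mu F n = sInf B
  have hmuA : mu F n = sInf A := rfl
  apply le_antisymm
  · -- mu ≤ sInf B
    obtain ⟨f, hf, hfeq⟩ := Nat.sInf_mem hBne
    rw [hmuA]
    calc sInf A ≤ cycDist (Ideal.span {f}) + cycDim F (Ideal.span {f}) :=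
          Nat.sInf_le ⟨f, hf, rfl⟩
      _ ≤ cycWt f + wt (msVecPoly n ζ (cycRep f)) :=
          add_le_add (hdist_le f hf) (le_of_eq (key f hf))
      _ = sInf B := hfeq
  · -- sInf B ≤ mu
    obtain ⟨f, hf, hfeq⟩ := Nat.sInf_mem hAne
    -- the distance is attained by some g
    have hdset : {w | ∃ g ∈ Ideal.span {f}, g ≠ 0 ∧ cycWt g = w}.Nonempty :=
      ⟨cycWt f, f, Ideal.mem_span_singleton_self f, hf, rfl⟩
    obtain ⟨g, hgmem, hg0, hgw⟩ := Nat.sInf_mem hdset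
    have hspan : Ideal.span {g} ≤ Ideal.span {f} :=
      (Ideal.span_singleton_le_iff_mem _).mpr hgmem
    calc sInf B ≤ cycWt g + wt (msVecPoly n ζ (cycRep g)) :=
          Nat.sInf_le ⟨g, hg0, rfl⟩
      _ = cycWt g + cycDim F (Ideal.span {g}) := by rw [key g hg0]
      _ ≤ cycDist (Ideal.span {f}) + cycDim F (Ideal.span {f}) := by
          have h1 : cycWt g = cycDist (Ideal.span {f}) := hgw
          have h2 : cycDim F (Ideal.span {g}) ≤ cycDim F (Ideal.span {f}) :=
            cycDim_mono hn0 hspan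
          omega
      _ = mu F n := hfeq
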